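/- Let K₀ = {(1,0)} ∪ ⋃ₙ {(1 - 3/2^{n+1}, 1/2^{n+1}), (1 - 1/2^n, 3/2^{n+1})} ⊆ ℝ², viewed as 2×2 diagonal matrices. Then K₀ is compact and no two distinct points X, Y of K₀ satisfy rank(X - Y) = 1 (equivalently, no two distinct points agree in exactly one coordinate). -/

import Mathlib

/-- The set `K₀ ⊆ ℝ²`, identified with 2×2 diagonal matrices `diag(x,y) ↔ (x,y)`. -/
def K0 : Set (ℝ × ℝ) :=
  {(1, 0)} ∪ ⋃ n : ℕ,
    ({(1 - 3 / 2 ^ (n + 1), 1 / 2 ^ (n + 1)), (1 - 1 / 2 ^ n, 3 / 2 ^ (n + 1))} : Set (ℝ × ℝ))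

open Filter Topology

private lemma hpow0 : Tendsto (fun n : ℕ => (1 : ℝ) / 2 ^ n) atTop (𝓝 0) := by
  simp only [div_eq_mul_inv, one_mul, ← inv_pow]
  exact tendsto_pow_atTop_nhds_zero_of_lt_one (by norm_num) (by norm_num)

private lemma hpow0' (c : ℝ) : Tendsto (fun n : ℕ => c / 2 ^ (n + 1)) atTop (𝓝 0) := by
  have := (hpow0.const_mul c).comp (tendsto_add_atTop_nat 1)
  simpa [Function.comp_def, mul_one_div, div_eq_mul_inv] using this

private lemma pow_pos2 (n : ℕ) : (0:ℝ) < 2 ^ n := by positivity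

private lemma three_pow_ne (a b : ℕ) : (3 : ℝ) * 2 ^ a ≠ 2 ^ b := by
  have h : (3 * 2 ^ a : ℕ) ≠ 2 ^ b := by
    intro h
    have h3 : (3 : ℕ) ∣ 2 ^ b := ⟨2 ^ a, h.symm⟩
    have := Nat.Prime.dvd_of_dvd_pow (by norm_num) h3
    norm_num at this
  exact_mod_cast h

private lemma two_pow_inj {n m : ℕ} (h : (2 : ℝ) ^ n = 2 ^ m) : n = m := by
  have h' : (2 ^ n : ℕ) = 2 ^ m := by exact_mod_cast h
  exact Nat.pow_right_injective (by norm_num) h'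

private lemma cross {a b : ℕ} {c d : ℝ} (h : c / 2 ^ a = d / 2 ^ b) :
    c * 2 ^ b = d * 2 ^ a :=
  (div_eq_div_iff (pow_pos2 a).ne' (pow_pos2 b).ne').mp h

private lemma one_one {a b : ℕ} (h : (1:ℝ) / 2 ^ a = 1 / 2 ^ b) : a = b := by
  have := cross h; exact (two_pow_inj (by linarith)).symm

private lemma three_three {a b : ℕ} (h : (3:ℝ) / 2 ^ a = 3 / 2 ^ b) : a = b := by
  have := cross h
  exact (two_pow_inj (n := b) (m := a) (by linarith)).symm

private lemma one_three {a b : ℕ} (h : (1:ℝ) / 2 ^ a = 3 / 2 ^ b) : False := by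
  have := cross h; exact three_pow_ne a b (by linarith)

private lemma div_ne {a : ℕ} {c : ℝ} (hc : 0 < c) : c / 2 ^ a ≠ 0 := by
  have := pow_pos2 a; positivity

private lemma sub_eq_sub {x y : ℝ} (h : 1 - x = 1 - y) : x = y := by linarith

private lemma one_ne_sub {x : ℝ} (hx : x ≠ 0) : (1:ℝ) ≠ 1 - x := by
  intro h; exact hx (by linarith)

private lemma mem_K0 {X : ℝ × ℝ} (hX : X ∈ K0) :
    X = (1, 0) ∨ ∃ n : ℕ, X = (1 - 3 / 2 ^ (n + 1), 1 / 2 ^ (n + 1)) ∨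
      X = (1 - 1 / 2 ^ n, 3 / 2 ^ (n + 1)) := by
  simpa [K0, Set.mem_union, Set.mem_iUnion] using hX

private lemma K0_inj1 : ∀ X ∈ K0, ∀ Y ∈ K0, X.1 = Y.1 → X = Y := by
  intro X hX Y hY h
  rcases mem_K0 hX with rfl | ⟨n, rfl | rfl⟩ <;>
      rcases mem_K0 hY with rfl | ⟨m, rfl | rfl⟩ <;> simp only at h ⊢
  · exact absurd h (one_ne_sub (div_ne (by norm_num)))
  · exact absurd h (one_ne_sub (div_ne (by norm_num)))
  · exact absurd h.symm (one_ne_sub (div_ne (by norm_num)))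
  · rw [three_three (sub_eq_sub h)]
  · exact absurd (sub_eq_sub h).symm one_three
  · exact absurd h.symm (one_ne_sub (div_ne (by norm_num)))
  · exact absurd (sub_eq_sub h) one_three
  · rw [one_one (sub_eq_sub h)]

private lemma K0_inj2 : ∀ X ∈ K0, ∀ Y ∈ K0, X.2 = Y.2 → X = Y := by
  intro X hX Y hY h
  rcases mem_K0 hX with rfl | ⟨n, rfl | rfl⟩ <;>
      rcases mem_K0 hY with rfl | ⟨m, rfl | rfl⟩ <;> simp only at h ⊢
  · exact absurd h.symm (div_ne (by norm_num))
  · exact absurd h.symm (div_ne (by norm_num))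
  · exact absurd h (div_ne (by norm_num))
  · obtain rfl : n = m := Nat.succ_injective (one_one h); simp
  · exact absurd h one_three
  · exact absurd h (div_ne (by norm_num))
  · exact absurd h.symm one_three
  · obtain rfl : n = m := Nat.succ_injective (three_three h); simp

private lemma K0_compact : IsCompact K0 := by
  have hf : Tendsto (fun n : ℕ => ((1 - 3 / 2 ^ (n + 1), 1 / 2 ^ (n + 1)) : ℝ × ℝ))
      atTop (𝓝 (1, 0)) := by
    refine Tendsto.prodMk_nhds ?_ ?_
    · simpa using (tendsto_const_nhds (x := (1:ℝ))).sub (hpow0' 3)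
    · exact hpow0' 1
  have hg : Tendsto (fun n : ℕ => ((1 - 1 / 2 ^ n, 3 / 2 ^ (n + 1)) : ℝ × ℝ))
      atTop (𝓝 (1, 0)) := by
    refine Tendsto.prodMk_nhds ?_ ?_
    · simpa using (tendsto_const_nhds (x := (1:ℝ))).sub hpow0
    · exact hpow0' 3
  have h1 := hf.isCompact_insert_range
  have h2 := hg.isCompact_insert_range
  have hK : K0 = insert ((1:ℝ), (0:ℝ)) (Set.range fun n : ℕ =>
      ((1 - 3 / 2 ^ (n + 1), 1 / 2 ^ (n + 1)) : ℝ × ℝ)) ∪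
      insert ((1:ℝ), (0:ℝ)) (Set.range fun n : ℕ =>
      ((1 - 1 / 2 ^ n, 3 / 2 ^ (n + 1)) : ℝ × ℝ)) := by
    ext x
    simp only [K0, Set.mem_union, Set.mem_singleton_iff, Set.mem_iUnion,
      Set.mem_insert_iff, Set.mem_range, Set.mem_setOf_eq]
    constructor
    · rintro (h | ⟨n, hn⟩)
      · exact Or.inl (Or.inl h)
      · rcases hn with h | h
        · exact Or.inl (Or.inr ⟨n, h.symm⟩)
        · exact Or.inr (Or.inr ⟨n, h.symm⟩)
    · rintro ((h | ⟨n, h⟩) | (h | ⟨n, h⟩))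
      · exact Or.inl h
      · exact Or.inr ⟨n, by simp [← h]⟩
      · exact Or.inl h
      · exact Or.inr ⟨n, by simp [← h]⟩
  rw [hK]
  exact h1.union h2

/-- `K₀` is compact and has no rank-one connections: no two distinct points of `K₀`
agree in exactly one coordinate. -/
theorem stmt0 :
    IsCompact K0 ∧
      ∀ X ∈ K0, ∀ Y ∈ K0, X ≠ Y →
        ¬((X.1 = Y.1 ∧ X.2 ≠ Y.2) ∨ (X.1 ≠ Y.1 ∧ X.2 = Y.2)) := by
  refine ⟨K0_compact, ?_⟩
  rintro X hX Y hY hne (⟨h, -⟩ | ⟨-, h⟩)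
  · exact hne (K0_inj1 X hX Y hY h)
  · exact hne (K0_inj2 X hX Y hY h)
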